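/- Let H be a complex inner product space and let x ∈ H be nonzero. Let v, w ∈ ℂ and s, u ∈ H satisfy ⟨x, s⟩ = 0, and set y = v • x + s; assume y ≠ 0. Suppose ⟨x, u⟩ = 0 and ⟨y, u⟩ = 0, and set z = w • y + u; assume z ≠ 0. Then C(x, z) ≤ C(y, z). Moreover, if w ≠ 0 and s ≠ 0, then C(x, z) < C(y, z). -/

import Mathlib

open scoped InnerProductSpace

/-- The coherence of two vectors of a complex inner product space
(inner product conjugate-linear in the first argument):
`C(u, v) = ‖⟪u, v⟫‖² / (‖u‖² · ‖v‖²)`. -/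
noncomputable def coherence {H : Type*} [NormedAddCommGroup H]
    [InnerProductSpace ℂ H] (u v : H) : ℝ :=
  ‖⟪u, v⟫_ℂ‖ ^ 2 / (‖u‖ ^ 2 * ‖v‖ ^ 2)

/-- single-frequency core, case A, of the paper's Lemma 3: if
`y = v • x + s` with `s ⟂ x`, and `z = w • y + u` with `u` orthogonal to both
`x` and `y`, then the coherence of `z` with its 'parent' `y` is at least its
coherence with the more remote signal `x`; strict if `w ≠ 0` and `s ≠ 0`. -/
theorem coherence_child_ge_remote
    {H : Type*} [NormedAddCommGroup H] [InnerProductSpace ℂ H]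
    (x : H) (hx : x ≠ 0)
    (v w : ℂ) (s u : H)
    (hxs : ⟪x, s⟫_ℂ = 0)
    (y : H) (hy : y = v • x + s) (hy0 : y ≠ 0)
    (hxu : ⟪x, u⟫_ℂ = 0) (hyu : ⟪y, u⟫_ℂ = 0)
    (z : H) (hz : z = w • y + u) (hz0 : z ≠ 0) :
    coherence x z ≤ coherence y z ∧
    (w ≠ 0 → s ≠ 0 → coherence x z < coherence y z) := by
  have hxy : ⟪x, y⟫_ℂ = v * (‖x‖ : ℂ) ^ 2 := by
    simp [hy, inner_add_right, inner_smul_right, hxs, inner_self_eq_norm_sq_to_K]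
  have hxz : ⟪x, z⟫_ℂ = w * (v * (‖x‖ : ℂ) ^ 2) := by
    simp [hz, inner_add_right, inner_smul_right, hxu, hxy]
  have hyz : ⟪y, z⟫_ℂ = w * (‖y‖ : ℂ) ^ 2 := by
    simp [hz, inner_add_right, inner_smul_right, hyu, inner_self_eq_norm_sq_to_K]
  have hny : ‖y‖ ^ 2 = ‖v‖ ^ 2 * ‖x‖ ^ 2 + ‖s‖ ^ 2 := by
    have := @norm_add_sq_eq_norm_sq_add_norm_sq_of_inner_eq_zero ℂ _ _ _ _ (v • x) s
      (by simp [inner_smul_left, hxs])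
    rw [hy]
    rw [norm_smul] at this
    nlinarith [this]
  have hnx : (0:ℝ) < ‖x‖ ^ 2 := by
    have : 0 < ‖x‖ := norm_pos_iff.mpr hx
    positivity
  have hny0 : (0:ℝ) < ‖y‖ ^ 2 := by
    have : 0 < ‖y‖ := norm_pos_iff.mpr hy0
    positivity
  have hnz : (0:ℝ) < ‖z‖ ^ 2 := by
    have : 0 < ‖z‖ := norm_pos_iff.mpr hz0
    positivity
  have hCx : coherence x z = ‖w‖ ^ 2 * ‖v‖ ^ 2 * ‖x‖ ^ 2 / ‖z‖ ^ 2 := by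
    unfold coherence
    rw [hxz]
    simp only [norm_mul, norm_pow, Complex.norm_real, norm_norm]
    field_simp
  have hCy : coherence y z = ‖w‖ ^ 2 * ‖y‖ ^ 2 / ‖z‖ ^ 2 := by
    unfold coherence
    rw [hyz]
    simp only [norm_mul, norm_pow, Complex.norm_real, norm_norm]
    field_simp
  constructor
  · rw [hCx, hCy]
    rw [div_le_div_iff₀ hnz hnz, hny]
    nlinarith [sq_nonneg ‖s‖, sq_nonneg (‖w‖*‖s‖), hnz]
  · intro hw hs
    have hw2 : (0:ℝ) < ‖w‖ ^ 2 := by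
      have : 0 < ‖w‖ := norm_pos_iff.mpr hw
      positivity
    have hs2 : (0:ℝ) < ‖s‖ ^ 2 := by
      have : 0 < ‖s‖ := norm_pos_iff.mpr hs
      positivity
    rw [hCx, hCy]
    rw [div_lt_div_iff₀ hnz hnz, hny]
    nlinarith [mul_pos (mul_pos hw2 hs2) hnz]
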